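/- (Deterministic core of Lemma 1.3: restricted strong convexity from a restricted-eigenvalue design condition.) Let (x_i, y_i), i = 1,…,n, be data with x_i ∈ ℝ^p and y_i ∈ Y, and let f : ℝ × Y → ℝ be twice differentiable in its first argument with first derivative ∂f and second derivative ∂²f. Let L(β) = (1/n)Σ_{i=1}^n f(⟨x_i, β⟩, y_i) and S(β) = (1/n)Σ_{i=1}^n ∂f(⟨x_i, β⟩, y_i) x_i. Let β* ∈ ℝ^p with support s = {j : β*_j ≠ 0} of cardinality at most k (k ≥ 1), and let M₁, κ₁, κ₂ > 0. Assume: (i) ∂²f(⟨x_i, β* + h'⟩, y_i) ≥ M₁ for every i and every h' ∈ ℝ^p with ‖h'‖₁ ≤ 2‖β*‖₁; (ii) for every v ∈ ℝ^p, √((1/n)Σ_{i=1}^n ⟨x_i, v⟩²) ≥ κ₁‖v‖₂ − κ₂√(log p / n)‖v‖₁; (iii) n > 4(κ₂/κ₁)² k log p. Then for every h ∈ ℝ^p with ‖h_{s^c}‖₁ ≤ ‖h_s‖₁ and ‖h‖₁ ≤ 2‖β*‖₁, L(β* + h) − L(β*) − ⟨S(β*), h⟩ ≥ τ‖h‖₂²,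 where τ = (M₁/2)(κ₁ − 2κ₂√(k log p / n))² > 0. -/

import Mathlib

lemma taylor_quad_lb (φ dφ d2φ : ℝ → ℝ) (c : ℝ)
    (h1 : ∀ t, HasDerivAt φ (dφ t) t)
    (h2 : ∀ t, HasDerivAt dφ (d2φ t) t)
    (hc : ∀ t ∈ Set.Icc (0:ℝ) 1, c ≤ d2φ t) :
    φ 0 + dφ 0 + c / 2 ≤ φ 1 := by
  set ψ' : ℝ → ℝ := fun t => dφ t - dφ 0 - c * t with hψ'
  set ψ : ℝ → ℝ := fun t => φ t - φ 0 - t * dφ 0 - c * t ^ 2 / 2 with hψ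
  have hdψ' : ∀ t : ℝ, HasDerivAt ψ' (d2φ t - c) t := by
    intro t
    have : HasDerivAt (fun t : ℝ => c * t) c t := by
      simpa using (hasDerivAt_id t).const_mul c
    exact ((h2 t).sub_const (dφ 0)).sub this
  have hdψ : ∀ t : ℝ, HasDerivAt ψ (ψ' t) t := by
    intro t
    have hlin : HasDerivAt (fun t : ℝ => t * dφ 0) (dφ 0) t := by
      simpa using (hasDerivAt_id t).mul_const (dφ 0)
    have hsq : HasDerivAt (fun t : ℝ => c * t ^ 2 / 2) (c * t) t := by
      have := ((hasDerivAt_pow 2 t).const_mul c).div_const 2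
      simpa using this.congr_deriv (by ring)
    exact (((h1 t).sub_const (φ 0)).sub hlin).sub hsq
  have hm1 : MonotoneOn ψ' (Set.Icc (0:ℝ) 1) := by
    apply monotoneOn_of_deriv_nonneg (convex_Icc 0 1)
    · exact fun t _ => ((hdψ' t).continuousAt).continuousWithinAt
    · exact fun t _ => ((hdψ' t).differentiableAt).differentiableWithinAt
    · intro t ht
      rw [(hdψ' t).deriv]
      have := hc t (interior_subset ht)
      linarith
  have hψ'nn : ∀ t ∈ Set.Icc (0:ℝ) 1, 0 ≤ ψ' t := by
    intro t ht
    have := hm1 (Set.left_mem_Icc.2 zero_le_one) ht ht.1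
    simpa [hψ'] using this
  have hm2 : MonotoneOn ψ (Set.Icc (0:ℝ) 1) := by
    apply monotoneOn_of_deriv_nonneg (convex_Icc 0 1)
    · exact fun t _ => ((hdψ t).continuousAt).continuousWithinAt
    · exact fun t _ => ((hdψ t).differentiableAt).differentiableWithinAt
    · intro t ht
      rw [(hdψ t).deriv]
      exact hψ'nn t (interior_subset ht)
  have := hm2 (Set.left_mem_Icc.2 zero_le_one) (Set.right_mem_Icc.2 zero_le_one) zero_le_one
  simp only [hψ] at this
  nlinarith [this]

/-- Deterministic core of Lemma 1.3: restricted strong convexity from a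
restricted-eigenvalue design condition.  If the second derivative of the loss is
bounded below by `M₁` on the relevant ℓ1 ball, the design satisfies
`√((1/n)Σᵢ⟨xᵢ, v⟩²) ≥ κ₁‖v‖₂ − κ₂√(log p / n)‖v‖₁` for all `v`, and
`n > 4(κ₂/κ₁)² k log p`, then for every `h` in the cone `‖h_{sᶜ}‖₁ ≤ ‖h_s‖₁` with
`‖h‖₁ ≤ 2‖β*‖₁`, `L(β* + h) − L(β*) − ⟨S(β*), h⟩ ≥ τ‖h‖₂²` with
`τ = (M₁/2)(κ₁ − 2κ₂√(k log p / n))² > 0`. -/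
theorem rsc_from_restricted_eigenvalue {Y : Type*} (n p k : ℕ)
    (hn : 0 < n) (hp : 0 < p) (hk : 1 ≤ k)
    (x : Fin n → Fin p → ℝ) (y : Fin n → Y) (f df d2f : ℝ → Y → ℝ)
    (hderiv1 : ∀ (z : Y) (t : ℝ), HasDerivAt (fun u => f u z) (df t z) t)
    (hderiv2 : ∀ (z : Y) (t : ℝ), HasDerivAt (fun u => df u z) (d2f t z) t)
    (L : (Fin p → ℝ) → ℝ) (S : (Fin p → ℝ) → Fin p → ℝ)
    (hL : ∀ β, L β = (1 / n) * ∑ i, f (∑ j, x i j * β j) (y i))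
    (hS : ∀ β j, S β j = (1 / n) * ∑ i, df (∑ j', x i j' * β j') (y i) * x i j)
    (βstar : Fin p → ℝ) (M₁ κ₁ κ₂ : ℝ)
    (hM₁ : 0 < M₁) (hκ₁ : 0 < κ₁) (hκ₂ : 0 < κ₂)
    (hsupp : (Finset.univ.filter (fun j => βstar j ≠ 0)).card ≤ k)
    (hlb : ∀ (i : Fin n) (h' : Fin p → ℝ), (∑ j, |h' j|) ≤ 2 * ∑ j, |βstar j| →
      d2f (∑ j, x i j * (βstar j + h' j)) (y i) ≥ M₁)
    (hRE : ∀ v : Fin p → ℝ,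
      Real.sqrt ((1 / n) * ∑ i, (∑ j, x i j * v j) ^ 2) ≥
        κ₁ * Real.sqrt (∑ j, (v j) ^ 2) -
          κ₂ * Real.sqrt (Real.log p / n) * ∑ j, |v j|)
    (hlogp : 0 < Real.log p)
    (hsample : (n : ℝ) > 4 * (κ₂ / κ₁) ^ 2 * k * Real.log p) :
    0 < (M₁ / 2) * (κ₁ - 2 * κ₂ * Real.sqrt (k * Real.log p / n)) ^ 2 ∧
      ∀ h : Fin p → ℝ,
        (∑ j ∈ (Finset.univ.filter (fun j => βstar j ≠ 0))ᶜ, |h j| ≤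
          ∑ j ∈ Finset.univ.filter (fun j => βstar j ≠ 0), |h j|) →
        (∑ j, |h j|) ≤ 2 * ∑ j, |βstar j| →
        L (βstar + h) - L βstar - (∑ j, S βstar j * h j) ≥
          (M₁ / 2) * (κ₁ - 2 * κ₂ * Real.sqrt (k * Real.log p / n)) ^ 2 *
            ∑ j, (h j) ^ 2 := by
  have hn' : (0:ℝ) < n := Nat.cast_pos.2 hn
  have hk' : (1:ℝ) ≤ k := by exact_mod_cast hk
  set c : ℝ := κ₁ - 2 * κ₂ * Real.sqrt (k * Real.log p / n) with hc
  -- positivity of c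
  have hcpos : 0 < c := by
    have h1 : Real.sqrt (k * Real.log p / n) < κ₁ / (2 * κ₂) := by
      rw [Real.sqrt_lt' (by positivity)]
      rw [div_lt_iff₀ hn']
      have key : (κ₁ / (2 * κ₂)) ^ 2 * (4 * (κ₂ / κ₁) ^ 2) = 1 := by
        field_simp; ring
      have hkl : (0:ℝ) < k * Real.log p := by positivity
      nlinarith [mul_lt_mul_of_pos_left hsample (show (0:ℝ) < (κ₁ / (2*κ₂))^2 by positivity)]
    have h2 := (lt_div_iff₀ (by positivity : (0:ℝ) < 2 * κ₂)).1 h1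
    rw [hc]; nlinarith [h2]
  constructor
  · positivity
  intro h hcone hball
  set s := Finset.univ.filter (fun j => βstar j ≠ 0) with hs
  set a : Fin n → ℝ := fun i => ∑ j, x i j * βstar j with ha
  set b : Fin n → ℝ := fun i => ∑ j, x i j * h j with hb
  have hl2nn : (0:ℝ) ≤ Real.sqrt (∑ j, (h j) ^ 2) := Real.sqrt_nonneg _
  -- cone bound : ℓ1 ≤ 2 √k ℓ2
  have hl1 : (∑ j, |h j|) ≤ 2 * Real.sqrt k * Real.sqrt (∑ j, (h j) ^ 2) := by
    have hsplit : (∑ j, |h j|) = (∑ j ∈ s, |h j|) + ∑ j ∈ sᶜ, |h j| :=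
      (Finset.sum_add_sum_compl s _).symm
    have hCS : (∑ j ∈ s, |h j|) ^ 2 ≤ (s.card : ℝ) * ∑ j ∈ s, |h j| ^ 2 := by
      exact_mod_cast sq_sum_le_card_mul_sum_sq (s := s) (f := fun j => |h j|)
    have h2 : (∑ j ∈ s, |h j| ^ 2) ≤ ∑ j, (h j) ^ 2 := by
      simp only [sq_abs]
      exact Finset.sum_le_sum_of_subset_of_nonneg (Finset.subset_univ s)
        (fun j _ _ => sq_nonneg _)
    have h3 : (∑ j ∈ s, |h j|) ≤ Real.sqrt k * Real.sqrt (∑ j, (h j) ^ 2) := by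
      have hnn : (0:ℝ) ≤ ∑ j ∈ s, |h j| := Finset.sum_nonneg fun j _ => abs_nonneg _
      rw [← Real.sqrt_sq hnn, ← Real.sqrt_mul (by positivity : (0:ℝ) ≤ (k:ℝ))]
      apply Real.sqrt_le_sqrt
      calc (∑ j ∈ s, |h j|) ^ 2 ≤ (s.card : ℝ) * ∑ j ∈ s, |h j| ^ 2 := hCS
        _ ≤ (k:ℝ) * ∑ j, (h j) ^ 2 := by
            apply mul_le_mul (by exact_mod_cast hsupp) h2
              (Finset.sum_nonneg fun j _ => by positivity) (by positivity)
    calc (∑ j, |h j|) = (∑ j ∈ s, |h j|) + ∑ j ∈ sᶜ, |h j| := hsplit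
      _ ≤ (∑ j ∈ s, |h j|) + ∑ j ∈ s, |h j| := by linarith [hcone]
      _ = 2 * ∑ j ∈ s, |h j| := by ring
      _ ≤ 2 * (Real.sqrt k * Real.sqrt (∑ j, (h j) ^ 2)) := by linarith [h3]
      _ = 2 * Real.sqrt k * Real.sqrt (∑ j, (h j) ^ 2) := by ring
  -- RE bound : (1/n) Σ b² ≥ c² Σ h²
  have hsqrtmul : Real.sqrt (k * Real.log p / n) =
      Real.sqrt k * Real.sqrt (Real.log p / n) := by
    rw [mul_div_assoc, Real.sqrt_mul (by positivity)]
  have hREh := hRE h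
  have hRE2 : Real.sqrt ((1 / n) * ∑ i, (b i) ^ 2) ≥
      c * Real.sqrt (∑ j, (h j) ^ 2) := by
    have hbd : κ₂ * Real.sqrt (Real.log p / n) * ∑ j, |h j| ≤
        κ₂ * Real.sqrt (Real.log p / n) * (2 * Real.sqrt k * Real.sqrt (∑ j, (h j) ^ 2)) :=
      mul_le_mul_of_nonneg_left hl1 (by positivity)
    have : c * Real.sqrt (∑ j, (h j) ^ 2) =
        κ₁ * Real.sqrt (∑ j, (h j) ^ 2) -
          κ₂ * Real.sqrt (Real.log p / n) * (2 * Real.sqrt k * Real.sqrt (∑ j, (h j) ^ 2)) := by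
      rw [hc, hsqrtmul]; ring
    rw [this]
    calc κ₁ * Real.sqrt (∑ j, (h j) ^ 2) -
          κ₂ * Real.sqrt (Real.log p / n) * (2 * Real.sqrt k * Real.sqrt (∑ j, (h j) ^ 2))
        ≤ κ₁ * Real.sqrt (∑ j, (h j) ^ 2) -
          κ₂ * Real.sqrt (Real.log p / n) * ∑ j, |h j| := by linarith
      _ ≤ Real.sqrt ((1 / n) * ∑ i, (b i) ^ 2) := hREh
  have hquad : c ^ 2 * ∑ j, (h j) ^ 2 ≤ (1 / n) * ∑ i, (b i) ^ 2 := by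
    have hsum_nn : (0:ℝ) ≤ (1 / n) * ∑ i, (b i) ^ 2 := by positivity
    have h1 : (c * Real.sqrt (∑ j, (h j) ^ 2)) ^ 2 ≤
        (Real.sqrt ((1 / n) * ∑ i, (b i) ^ 2)) ^ 2 :=
      pow_le_pow_left₀ (by positivity) hRE2 2
    rw [Real.sq_sqrt hsum_nn] at h1
    calc c ^ 2 * ∑ j, (h j) ^ 2 = (c * Real.sqrt (∑ j, (h j) ^ 2)) ^ 2 := by
          rw [mul_pow, Real.sq_sqrt (Finset.sum_nonneg fun j _ => sq_nonneg _)]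
      _ ≤ _ := h1
  -- per-i Taylor bound
  have hTaylor : ∀ i : Fin n,
      f (a i) (y i) + df (a i) (y i) * b i + M₁ * (b i) ^ 2 / 2 ≤ f (a i + b i) (y i) := by
    intro i
    have key := taylor_quad_lb (fun t => f (a i + t * b i) (y i))
      (fun t => df (a i + t * b i) (y i) * b i)
      (fun t => d2f (a i + t * b i) (y i) * (b i) ^ 2) (M₁ * (b i) ^ 2)
      (fun t => by
        have hin : HasDerivAt (fun t : ℝ => a i + t * b i) (b i) t := by
          simpa using ((hasDerivAt_id t).mul_const (b i)).const_add (a i)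
        exact (hderiv1 (y i) (a i + t * b i)).comp t hin)
      (fun t => by
        have hin : HasDerivAt (fun t : ℝ => a i + t * b i) (b i) t := by
          simpa using ((hasDerivAt_id t).mul_const (b i)).const_add (a i)
        have := (hderiv2 (y i) (a i + t * b i)).comp t hin
        have h2 : HasDerivAt (fun t : ℝ => df (a i + t * b i) (y i))
            (d2f (a i + t * b i) (y i) * b i) t := this
        simpa [sq, mul_assoc, mul_comm, mul_left_comm] using h2.mul_const (b i))
      (fun t ht => by
        have harg : a i + t * b i = ∑ j, x i j * (βstar j + t * h j) := by
          simp only [ha, hb, mul_add, Finset.sum_add_distrib, Finset.mul_sum]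
          congr 1
          exact Finset.sum_congr rfl fun j _ => by ring
        have hball' : (∑ j, |t * h j|) ≤ 2 * ∑ j, |βstar j| := by
          calc (∑ j, |t * h j|) = |t| * ∑ j, |h j| := by
                rw [Finset.mul_sum]; exact Finset.sum_congr rfl fun j _ => abs_mul _ _
            _ ≤ 1 * ∑ j, |h j| := by
                apply mul_le_mul_of_nonneg_right _ (Finset.sum_nonneg fun j _ => abs_nonneg _)
                rw [abs_le]; exact ⟨by linarith [ht.1], ht.2⟩
            _ = ∑ j, |h j| := one_mul _
            _ ≤ _ := hball
        have := hlb i (fun j => t * h j) hball'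
        rw [← harg] at this
        exact mul_le_mul_of_nonneg_right this (sq_nonneg _))
    simpa using key
  -- assemble
  have hLsum : L (βstar + h) - L βstar - (∑ j, S βstar j * h j) =
      (1 / n) * ∑ i, (f (a i + b i) (y i) - f (a i) (y i) - df (a i) (y i) * b i) := by
    have e1 : L (βstar + h) = (1 / n) * ∑ i, f (a i + b i) (y i) := by
      rw [hL]
      congr 1
      apply Finset.sum_congr rfl
      intro i _
      congr 1
      simp only [ha, hb, Pi.add_apply, mul_add, Finset.sum_add_distrib]
    have e2 : L βstar = (1 / n) * ∑ i, f (a i) (y i) := hL βstar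
    have e3 : (∑ j, S βstar j * h j) = (1 / n) * ∑ i, df (a i) (y i) * b i := by
      calc (∑ j, S βstar j * h j)
          = ∑ j, ∑ i, (1/(n:ℝ)) * (df (a i) (y i) * (x i j * h j)) := by
            apply Finset.sum_congr rfl; intro j _
            rw [hS, Finset.mul_sum, Finset.sum_mul]
            apply Finset.sum_congr rfl; intro i _
            simp only [ha]; ring
        _ = ∑ i, ∑ j, (1/(n:ℝ)) * (df (a i) (y i) * (x i j * h j)) := Finset.sum_comm
        _ = (1 / n) * ∑ i, df (a i) (y i) * b i := by
            rw [Finset.mul_sum]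
            apply Finset.sum_congr rfl; intro i _
            simp only [hb, Finset.mul_sum]
    rw [e1, e2, e3]
    rw [Finset.mul_sum, Finset.mul_sum, Finset.mul_sum, Finset.mul_sum,
      ← Finset.sum_sub_distrib, ← Finset.sum_sub_distrib]
    apply Finset.sum_congr rfl; intro i _; ring
  have final : (M₁ / 2) * c ^ 2 * ∑ j, (h j) ^ 2 ≤
      (1 / n) * ∑ i, (f (a i + b i) (y i) - f (a i) (y i) - df (a i) (y i) * b i) := by
    have t1 : (1/(n:ℝ)) * ∑ i, (M₁ * (b i) ^ 2 / 2) ≤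
        (1 / n) * ∑ i, (f (a i + b i) (y i) - f (a i) (y i) - df (a i) (y i) * b i) := by
      apply mul_le_mul_of_nonneg_left _ (by positivity)
      exact Finset.sum_le_sum fun i _ => by linarith [hTaylor i]
    have t2 : (1/(n:ℝ)) * ∑ i, (M₁ * (b i) ^ 2 / 2) =
        (M₁ / 2) * ((1 / n) * ∑ i, (b i) ^ 2) := by
      rw [Finset.mul_sum, Finset.mul_sum, Finset.mul_sum]
      apply Finset.sum_congr rfl; intro i _; ring
    have t3 : (M₁ / 2) * (c ^ 2 * ∑ j, (h j) ^ 2) ≤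
        (M₁ / 2) * ((1 / n) * ∑ i, (b i) ^ 2) :=
      mul_le_mul_of_nonneg_left hquad (by positivity)
    linarith
  rw [hLsum, ge_iff_le]
  exact final
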